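/- The open hypercube (0,1)^n is forward invariant under the BinPAC dynamics: every solution x : [0,T̄) → ℝ^n of ẋ = (|H(x)|_m)^{-1} diag((x_i − x_i²)/T) (Wx + v + (T/τ)(log(1/x_i − 1))_i) with x(0) ∈ (0,1)^n satisfies x(t) ∈ (0,1)^n for all t ∈ [0,T̄). -/

import Mathlib

open Matrix

/-- The Positive-definite Truncated inverse (PT-inverse) with parameter `m` of a
symmetric matrix `A = QᵀΛQ`: eigenvalues of magnitude `≥ m` are replaced by their
absolute value, eigenvalues of magnitude `< m` by `m`, and the result is inverted
(junk value `0` on non-Hermitian input). -/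
noncomputable def PTinv {n : ℕ} (m : ℝ) (A : Matrix (Fin n) (Fin n) ℝ) :
    Matrix (Fin n) (Fin n) ℝ :=
  if hA : A.IsHermitian then
    (Matrix.IsHermitian.eigenvectorUnitary hA : Matrix (Fin n) (Fin n) ℝ) *
      Matrix.diagonal (fun i => (max |hA.eigenvalues i| m)⁻¹) *
      star (Matrix.IsHermitian.eigenvectorUnitary hA : Matrix (Fin n) (Fin n) ℝ)
  else 0

-- Auxiliary lemmas
-- aux: entry of U * diagonal d * star U
lemma udu_entry {n : ℕ} (U : Matrix (Fin n) (Fin n) ℝ) (d : Fin n → ℝ) (i j : Fin n) :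
    (U * Matrix.diagonal d * star U) i j = ∑ k, U i k * d k * U j k := by
  simp [Matrix.mul_apply, Matrix.mul_diagonal, Matrix.star_apply, Matrix.diagonal_apply,
    Finset.mul_sum, Finset.sum_ite_eq, mul_comm]

lemma udu_mul {n : ℕ} (U : Matrix (Fin n) (Fin n) ℝ) (hU : star U * U = 1)
    (d e : Fin n → ℝ) :
    (U * Matrix.diagonal d * star U) * (U * Matrix.diagonal e * star U)
      = U * Matrix.diagonal (fun k => d k * e k) * star U := by
  calc (U * Matrix.diagonal d * star U) * (U * Matrix.diagonal e * star U)
      = U * Matrix.diagonal d * (star U * U) * Matrix.diagonal e * star U := by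
        simp only [Matrix.mul_assoc]
    _ = U * Matrix.diagonal (fun k => d k * e k) * star U := by
        rw [hU, Matrix.mul_one]
        rw [show U * Matrix.diagonal d * Matrix.diagonal e * star U
            = U * (Matrix.diagonal d * Matrix.diagonal e) * star U by simp [Matrix.mul_assoc],
          Matrix.diagonal_mul_diagonal]

lemma row_norm {n : ℕ} (U : Matrix (Fin n) (Fin n) ℝ) (hU : U * star U = 1) (i : Fin n) :
    ∑ k, U i k ^ 2 = 1 := by
  have := congrFun (congrFun hU i) i
  simpa [Matrix.mul_apply, Matrix.star_apply, Matrix.one_apply, sq] using this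

lemma udu_entry_bound {n : ℕ} (U : Matrix (Fin n) (Fin n) ℝ) (hU : U * star U = 1)
    (d : Fin n → ℝ) (c : ℝ) (hc0 : 0 ≤ c) (hc : ∀ k, |d k| ≤ c) (i j : Fin n) :
    |(U * Matrix.diagonal d * star U) i j| ≤ c := by
  rw [udu_entry]
  have h1 : |∑ k, U i k * d k * U j k| ≤ ∑ k, |U i k| * c * |U j k| := by
    refine (Finset.abs_sum_le_sum_abs _ _).trans (Finset.sum_le_sum fun k _ => ?_)
    rw [abs_mul, abs_mul]
    exact mul_le_mul_of_nonneg_right (mul_le_mul_of_nonneg_left (hc k) (abs_nonneg _))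
      (abs_nonneg _)
  have h2 : ∑ k, |U i k| * c * |U j k| = c * ∑ k, |U i k| * |U j k| := by
    rw [Finset.mul_sum]; congr 1; ext k; ring
  have h3 : (∑ k, |U i k| * |U j k|) ≤ 1 := by
    have hcs := Finset.sum_mul_sq_le_sq_mul_sq Finset.univ (fun k => |U i k|) (fun k => |U j k|)
    have hi := row_norm U hU i
    have hj := row_norm U hU j
    simp only [sq_abs] at hcs
    have : (∑ k, |U i k| * |U j k|) ^ 2 ≤ 1 := by
      calc (∑ k, |U i k| * |U j k|) ^ 2 ≤ (∑ k, U i k ^ 2) * (∑ k, U j k ^ 2) := hcs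
        _ = 1 := by rw [hi, hj, one_mul]
    nlinarith [Finset.sum_nonneg (fun k (_ : k ∈ Finset.univ) => mul_nonneg (abs_nonneg (U i k)) (abs_nonneg (U j k)))]
  calc |∑ k, U i k * d k * U j k| ≤ c * ∑ k, |U i k| * |U j k| := by rw [← h2]; exact h1
    _ ≤ c * 1 := by gcongr
    _ = c := mul_one c

lemma PTinv_eq {n : ℕ} (m : ℝ) (A : Matrix (Fin n) (Fin n) ℝ) (hA : A.IsHermitian) :
    PTinv m A = (hA.eigenvectorUnitary : Matrix (Fin n) (Fin n) ℝ) *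
      Matrix.diagonal (fun k => (max |hA.eigenvalues k| m)⁻¹) *
      star (hA.eigenvectorUnitary : Matrix (Fin n) (Fin n) ℝ) := by
  rw [PTinv, dif_pos hA]

lemma spec_real {n : ℕ} (A : Matrix (Fin n) (Fin n) ℝ) (hA : A.IsHermitian) :
    A = (hA.eigenvectorUnitary : Matrix (Fin n) (Fin n) ℝ) *
      Matrix.diagonal hA.eigenvalues *
      star (hA.eigenvectorUnitary : Matrix (Fin n) (Fin n) ℝ) := by
  have := hA.spectral_theorem
  simpa using this

lemma herm_of_symm {n : ℕ} (W : Matrix (Fin n) (Fin n) ℝ) (hWs : Wᵀ = W)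
    (c : ℝ) (w : Fin n → ℝ) :
    (-W + c • Matrix.diagonal w).IsHermitian := by
  rw [Matrix.IsHermitian]
  ext i j
  have hw : W j i = W i j := by conv_lhs => rw [← hWs, Matrix.transpose_apply]
  simp only [Matrix.conjTranspose_apply, Matrix.add_apply, Matrix.neg_apply, Matrix.smul_apply,
    Matrix.diagonal_apply, star_trivial, smul_eq_mul]
  rcases eq_or_ne i j with h | h
  · subst h; simp [hw]
  · simp [h, Ne.symm h, hw]

lemma slog_le {y : ℝ} (h0 : 0 < y) (h1 : y < 1) :
    (y - y ^ 2) * |Real.log (1 / y - 1)| ≤ 2 := by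
  have h1y : 0 < 1 - y := by linarith
  have heq : 1 / y - 1 = (1 - y) / y := by field_simp
  have hlog : Real.log (1 / y - 1) = Real.log (1 - y) - Real.log y := by
    rw [heq, Real.log_div (by linarith) (ne_of_gt h0)]
  have hy2 : y * (-Real.log y) ≤ 1 - y := by
    have h := Real.log_le_sub_one_of_pos (show (0:ℝ) < y⁻¹ by positivity)
    rw [Real.log_inv] at h
    have hyy : y * y⁻¹ = 1 := mul_inv_cancel₀ (ne_of_gt h0)
    nlinarith [mul_le_mul_of_nonneg_left h (le_of_lt h0)]
  have h1y2 : (1 - y) * (-Real.log (1 - y)) ≤ y := by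
    have h := Real.log_le_sub_one_of_pos (show (0:ℝ) < (1 - y)⁻¹ by positivity)
    rw [Real.log_inv] at h
    have hyy : (1 - y) * (1 - y)⁻¹ = 1 := mul_inv_cancel₀ (ne_of_gt h1y)
    nlinarith [mul_le_mul_of_nonneg_left h (le_of_lt h1y)]
  have hly : Real.log y ≤ 0 := Real.log_nonpos (le_of_lt h0) (by linarith)
  have hl1y : Real.log (1 - y) ≤ 0 := Real.log_nonpos (le_of_lt h1y) (by linarith)
  have habs : |Real.log (1 / y - 1)| ≤ -Real.log (1 - y) + -Real.log y := by
    rw [hlog]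
    rw [abs_le]
    constructor <;> linarith
  have hs : y - y ^ 2 = y * (1 - y) := by ring
  calc (y - y ^ 2) * |Real.log (1 / y - 1)|
      ≤ (y - y ^ 2) * (-Real.log (1 - y) + -Real.log y) := by
        apply mul_le_mul_of_nonneg_left habs; nlinarith
    _ ≤ 2 := by nlinarith

lemma vf_bound {n : ℕ} (m T τ : ℝ) (hm : 0 < m) (hT : 0 < T) (hτ : 0 < τ)
    (W : Matrix (Fin n) (Fin n) ℝ) (hWs : Wᵀ = W) (v : Fin n → ℝ)
    (y : Fin n → ℝ) (hy : ∀ j, y j ∈ Set.Ioo (0:ℝ) 1) (i : Fin n) :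
    |(PTinv m (-W + (T / τ) • Matrix.diagonal (fun k => 1 / (y k - y k ^ 2))) *ᵥ
       fun j => (y j - y j ^ 2) / T *
         ((W *ᵥ y) j + v j + (T / τ) * Real.log (1 / y j - 1))) i|
    ≤ ((1 + (∑ k, |W i k|) / m) * (τ / T) *
        (∑ j, (((∑ k, |W j k|) + |v j|) / T + 2 / τ))) * (y i - y i ^ 2) := by
  have hs : ∀ j, 0 < y j - y j ^ 2 := by
    intro j; have := (hy j).1; have := (hy j).2; nlinarith
  have hs1 : ∀ j, y j - y j ^ 2 ≤ 1 := by
    intro j; have := (hy j).1; have := (hy j).2; nlinarith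
  set Hm := -W + (T / τ) • Matrix.diagonal (fun k => 1 / (y k - y k ^ 2)) with hHm
  have hA : Hm.IsHermitian := herm_of_symm W hWs _ _
  set U := (hA.eigenvectorUnitary : Matrix (Fin n) (Fin n) ℝ) with hUdef
  have hU1 : U * star U = 1 := Matrix.mem_unitaryGroup_iff.mp (SetLike.coe_mem _)
  have hU2 : star U * U = 1 := Matrix.mem_unitaryGroup_iff'.mp (SetLike.coe_mem _)
  set f : Fin n → ℝ := fun k => (max |hA.eigenvalues k| m)⁻¹ with hfdef
  set P := PTinv m Hm with hPdef
  have hP : P = U * Matrix.diagonal f * star U := PTinv_eq m Hm hA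
  -- entry bound on P
  have hfb : ∀ k, |f k| ≤ m⁻¹ := by
    intro k
    have h1 : 0 < max |hA.eigenvalues k| m := lt_max_of_lt_right hm
    rw [abs_of_pos (inv_pos.mpr h1)]
    exact inv_anti₀ hm (le_max_right _ _)
  have hPentry : ∀ k j, |P k j| ≤ m⁻¹ := by
    intro k j
    rw [hP]
    exact udu_entry_bound U hU1 f m⁻¹ (le_of_lt (inv_pos.mpr hm)) hfb k j
  -- bound on (Hm * P) entries
  have hHP : Hm * P = U * Matrix.diagonal (fun k => hA.eigenvalues k * f k) * star U := by
    rw [hP]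
    conv_lhs => rw [spec_real Hm hA]
    exact udu_mul U hU2 _ _
  have hHPb : ∀ j, |(Hm * P) i j| ≤ 1 := by
    intro j
    rw [hHP]
    refine udu_entry_bound U hU1 _ 1 zero_le_one (fun k => ?_) i j
    have h1 : 0 < max |hA.eigenvalues k| m := lt_max_of_lt_right hm
    rw [abs_mul, abs_of_pos (inv_pos.mpr h1)]
    rw [← div_eq_mul_inv, div_le_one h1]
    exact le_max_left _ _
  -- the key identity and P row bound
  have hWPb : ∀ j, |(W * P) i j| ≤ (∑ k, |W i k|) / m := by
    intro j
    rw [Matrix.mul_apply]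
    calc |∑ k, W i k * P k j| ≤ ∑ k, |W i k * P k j| := Finset.abs_sum_le_sum_abs _ _
      _ ≤ ∑ k, |W i k| * m⁻¹ := by
          refine Finset.sum_le_sum fun k _ => ?_
          rw [abs_mul]
          exact mul_le_mul_of_nonneg_left (hPentry k j) (abs_nonneg _)
      _ = (∑ k, |W i k|) / m := by rw [← Finset.sum_mul, div_eq_mul_inv]
  have hid : ∀ j, (T / τ) * ((1 / (y i - y i ^ 2)) * P i j)
      = (Hm * P) i j + (W * P) i j := by
    intro j
    have h1 : Hm * P + W * P = ((T / τ) • Matrix.diagonal (fun k => 1 / (y k - y k ^ 2))) * P := by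
      rw [← Matrix.add_mul, hHm]; congr 1; abel
    have h2 := congrFun (congrFun h1 i) j
    rw [Matrix.add_apply] at h2
    rw [h2, Matrix.smul_mul, Matrix.smul_apply, Matrix.diagonal_mul, smul_eq_mul]
  have hProw : ∀ j, |P i j| ≤ (1 + (∑ k, |W i k|) / m) * (τ / T) * (y i - y i ^ 2) := by
    intro j
    have key : (T / τ) * ((1 / (y i - y i ^ 2)) * |P i j|) ≤ 1 + (∑ k, |W i k|) / m := by
      have h3 : |(T / τ) * ((1 / (y i - y i ^ 2)) * P i j)| ≤ 1 + (∑ k, |W i k|) / m := by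
        rw [hid j]
        exact (abs_add_le _ _).trans (add_le_add (hHPb j) (hWPb j))
      rw [abs_mul, abs_mul] at h3
      rwa [abs_of_pos (div_pos hT hτ), abs_of_pos (one_div_pos.mpr (hs i))] at h3
    have hpos : 0 < (τ / T) * (y i - y i ^ 2) := mul_pos (div_pos hτ hT) (hs i)
    have hne : y i - y i ^ 2 ≠ 0 := ne_of_gt (hs i)
    have heq : |P i j| = ((τ / T) * (y i - y i ^ 2)) * ((T / τ) * ((1 / (y i - y i ^ 2)) * |P i j|)) := by
      have hTτ : (τ / T) * (T / τ) = 1 := by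
        rw [div_mul_div_comm, mul_comm τ T, div_self (by positivity)]
      calc |P i j| = ((τ / T) * (T / τ)) * ((y i - y i ^ 2) * (1 / (y i - y i ^ 2))) * |P i j| := by
            rw [hTτ, mul_one_div_cancel hne]; ring
        _ = _ := by ring
    rw [heq]
    calc ((τ / T) * (y i - y i ^ 2)) * ((T / τ) * ((1 / (y i - y i ^ 2)) * |P i j|))
        ≤ ((τ / T) * (y i - y i ^ 2)) * (1 + (∑ k, |W i k|) / m) :=
          mul_le_mul_of_nonneg_left key (le_of_lt hpos)
      _ = (1 + (∑ k, |W i k|) / m) * (τ / T) * (y i - y i ^ 2) := by ring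
  -- bound on g entries
  have hgb : ∀ j, |(y j - y j ^ 2) / T *
      ((W *ᵥ y) j + v j + (T / τ) * Real.log (1 / y j - 1))|
      ≤ ((∑ k, |W j k|) + |v j|) / T + 2 / τ := by
    intro j
    have hWy : |(W *ᵥ y) j| ≤ ∑ k, |W j k| := by
      rw [Matrix.mulVec, dotProduct]
      calc |∑ k, W j k * y k| ≤ ∑ k, |W j k * y k| := Finset.abs_sum_le_sum_abs _ _
        _ ≤ ∑ k, |W j k| := by
            refine Finset.sum_le_sum fun k _ => ?_
            rw [abs_mul]
            have : |y k| ≤ 1 := by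
              rw [abs_of_pos (hy k).1]; exact le_of_lt (hy k).2
            calc |W j k| * |y k| ≤ |W j k| * 1 :=
                mul_le_mul_of_nonneg_left this (abs_nonneg _)
              _ = |W j k| := mul_one _
    have hsl := slog_le (hy j).1 (hy j).2
    rw [abs_mul]
    have h1 : |(y j - y j ^ 2) / T| = (y j - y j ^ 2) / T := abs_of_pos (div_pos (hs j) hT)
    rw [h1]
    calc (y j - y j ^ 2) / T * |(W *ᵥ y) j + v j + (T / τ) * Real.log (1 / y j - 1)|
        ≤ (y j - y j ^ 2) / T * (|(W *ᵥ y) j| + |v j| + (T / τ) * |Real.log (1 / y j - 1)|) := by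
          apply mul_le_mul_of_nonneg_left _ (le_of_lt (div_pos (hs j) hT))
          calc |(W *ᵥ y) j + v j + (T / τ) * Real.log (1 / y j - 1)|
              ≤ |(W *ᵥ y) j + v j| + |(T / τ) * Real.log (1 / y j - 1)| := abs_add_le _ _
            _ ≤ |(W *ᵥ y) j| + |v j| + (T / τ) * |Real.log (1 / y j - 1)| := by
                rw [abs_mul, abs_of_pos (div_pos hT hτ)]
                exact add_le_add_left (abs_add_le _ _) _
      _ ≤ ((∑ k, |W j k|) + |v j|) / T + 2 / τ := by
          have hsj := hs j
          have hsj1 := hs1 j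
          have hLb : (y j - y j ^ 2) * |Real.log (1 / y j - 1)| ≤ 2 := hsl
          have e1 : (y j - y j ^ 2) / T * (|(W *ᵥ y) j| + |v j|) ≤ ((∑ k, |W j k|) + |v j|) / T := by
            rw [div_mul_eq_mul_div, div_le_div_iff₀ hT hT]
            have : (y j - y j ^ 2) * (|(W *ᵥ y) j| + |v j|) ≤ 1 * ((∑ k, |W j k|) + |v j|) := by
              apply mul_le_mul hsj1 (add_le_add_left hWy _) (by positivity) zero_le_one
            nlinarith
          have e2 : (y j - y j ^ 2) / T * ((T / τ) * |Real.log (1 / y j - 1)|) ≤ 2 / τ := by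
            have heq2 : (y j - y j ^ 2) / T * ((T / τ) * |Real.log (1 / y j - 1)|)
                = ((y j - y j ^ 2) * |Real.log (1 / y j - 1)|) / τ := by
              field_simp
            rw [heq2]
            exact (div_le_div_iff_of_pos_right hτ).mpr hLb
          nlinarith [abs_nonneg ((W *ᵥ y) j), abs_nonneg (v j)]
  -- assemble
  rw [Matrix.mulVec, dotProduct]
  have hB : ∀ j, (0:ℝ) ≤ ((∑ k, |W j k|) + |v j|) / T + 2 / τ := by
    intro j; positivity
  calc |∑ j, P i j * ((y j - y j ^ 2) / T *
        ((W *ᵥ y) j + v j + (T / τ) * Real.log (1 / y j - 1)))|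
      ≤ ∑ j, |P i j| * |(y j - y j ^ 2) / T *
        ((W *ᵥ y) j + v j + (T / τ) * Real.log (1 / y j - 1))| := by
        refine (Finset.abs_sum_le_sum_abs _ _).trans (Finset.sum_le_sum fun j _ => ?_)
        rw [abs_mul]
    _ ≤ ∑ j, ((1 + (∑ k, |W i k|) / m) * (τ / T) * (y i - y i ^ 2)) *
          (((∑ k, |W j k|) + |v j|) / T + 2 / τ) := by
        refine Finset.sum_le_sum fun j _ => ?_
        refine mul_le_mul (hProw j) (hgb j) (abs_nonneg _) ?_
        have : (0:ℝ) ≤ (1 + (∑ k, |W i k|) / m) * (τ / T) := by positivity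
        exact mul_nonneg this (le_of_lt (hs i))
    _ = ((1 + (∑ k, |W i k|) / m) * (τ / T) *
        (∑ j, (((∑ k, |W j k|) + |v j|) / T + 2 / τ))) * (y i - y i ^ 2) := by
        rw [← Finset.mul_sum]; ring

lemma exp_mono_pos (K t₀ : ℝ) (f f' : ℝ → ℝ) (ht₀ : 0 < t₀)
    (hf : ContinuousOn f (Set.Icc 0 t₀))
    (hderiv : ∀ s ∈ Set.Ioo (0:ℝ) t₀, HasDerivAt f (f' s) s)
    (hge : ∀ s ∈ Set.Ioo (0:ℝ) t₀, -K * f s ≤ f' s)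
    (h0 : 0 < f 0) : 0 < f t₀ := by
  set g : ℝ → ℝ := fun s => Real.exp (K * s) * f s with hg
  have hexp : ∀ s : ℝ, HasDerivAt (fun u => Real.exp (K * u)) (Real.exp (K * s) * K) s := by
    intro s
    exact ((hasDerivAt_id s).const_mul K).exp.congr_deriv (by simp only [id_eq]; ring)
  have hgd : ∀ s ∈ Set.Ioo (0:ℝ) t₀,
      HasDerivAt g (Real.exp (K * s) * (K * f s + f' s)) s := by
    intro s hs
    have := (hexp s).mul (hderiv s hs)
    exact this.congr_deriv (by ring)
  have hmono : MonotoneOn g (Set.Icc 0 t₀) := by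
    apply monotoneOn_of_deriv_nonneg (convex_Icc 0 t₀)
    · exact ((Real.continuous_exp.comp (continuous_const.mul continuous_id)).continuousOn).mul hf
    · intro s hs
      rw [interior_Icc] at hs
      exact (hgd s hs).differentiableAt.differentiableWithinAt
    · intro s hs
      rw [interior_Icc] at hs
      rw [(hgd s hs).deriv]
      have h1 := hge s hs
      have h2 := Real.exp_pos (K * s)
      nlinarith
  have h01 : g 0 ≤ g t₀ :=
    hmono ⟨le_refl 0, le_of_lt ht₀⟩ ⟨le_of_lt ht₀, le_refl t₀⟩ (le_of_lt ht₀)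
  have hg0 : 0 < g 0 := by simp [hg, h0]
  have hgt : 0 < Real.exp (K * t₀) * f t₀ := lt_of_lt_of_le hg0 h01
  nlinarith [Real.exp_pos (K * t₀)]

/-- **Forward invariance of the open hypercube under the BinPAC dynamics**
(Lemma: Forward Invariance of the Open Hypercube). Every solution of the BinPAC
dynamics starting in `(0,1)ⁿ` remains in `(0,1)ⁿ` on its interval of existence. -/
theorem binpac_forward_invariance
    (n : ℕ) (a b p : Fin n → ℝ)
    (γ T τ m : ℝ) (hγ : 0 < γ) (hT : 0 < T) (hτ : 0 < τ) (hm : 0 < m)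
    (Pr : ℝ)
    (W : Matrix (Fin n) (Fin n) ℝ)
    (hW : W = -(Matrix.diagonal a) - γ • Matrix.vecMulVec p p)
    (v : Fin n → ℝ) (hv : v = fun i => a i * b i + γ * Pr * p i)
    -- Hessian of the Hopfield energy on the open hypercube
    (H : (Fin n → ℝ) → Matrix (Fin n) (Fin n) ℝ)
    (hH : H = fun x => -W + (T / τ) • Matrix.diagonal (fun i => 1 / (x i - x i ^ 2)))
    -- the BinPAC vector field
    (vf : (Fin n → ℝ) → (Fin n → ℝ))
    (hvf : vf = fun x => PTinv m (H x) *ᵥ fun i =>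
      (x i - x i ^ 2) / T *
        ((W *ᵥ x) i + v i + (T / τ) * Real.log (1 / x i - 1)))
    -- a solution on [0, T̄)
    (Tbar : ℝ) (x : ℝ → Fin n → ℝ)
    (hsol : ∀ t ∈ Set.Ico (0 : ℝ) Tbar,
      HasDerivWithinAt x (vf (x t)) (Set.Ico (0 : ℝ) Tbar) t)
    (hx0 : ∀ i, x 0 i ∈ Set.Ioo (0 : ℝ) 1) :
    ∀ t ∈ Set.Ico (0 : ℝ) Tbar, ∀ i, x t i ∈ Set.Ioo (0 : ℝ) 1 := by
  have hWs : Wᵀ = W := by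
    rw [hW]
    ext i j
    simp only [Matrix.transpose_apply, Matrix.sub_apply, Matrix.neg_apply, Matrix.smul_apply,
      Matrix.diagonal_apply, Matrix.vecMulVec_apply, smul_eq_mul]
    rcases eq_or_ne i j with h | h
    · subst h; ring
    · simp [h, Ne.symm h, mul_comm]
  -- the pointwise bound on the vector field
  have hvfb : ∀ (y : Fin n → ℝ), (∀ j, y j ∈ Set.Ioo (0:ℝ) 1) → ∀ i,
      |vf y i| ≤ ((1 + (∑ k, |W i k|) / m) * (τ / T) *
        (∑ j, (((∑ k, |W j k|) + |v j|) / T + 2 / τ))) * (y i - y i ^ 2) := by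
    intro y hy i
    rw [hvf, hH]
    exact vf_bound m T τ hm hT hτ W hWs v y hy i
  intro t ht
  rcases eq_or_lt_of_le ht.1 with h0 | hpos
  · rw [← h0]; exact hx0
  by_contra hcon
  -- the bad set
  set B := {s ∈ Set.Icc (0:ℝ) t | ¬ ∀ i, x s i ∈ Set.Ioo (0:ℝ) 1} with hB
  have hBne : t ∈ B := ⟨⟨le_of_lt hpos, le_refl t⟩, hcon⟩
  have hIccsub : Set.Icc (0:ℝ) t ⊆ Set.Ico (0:ℝ) Tbar := fun s hs =>
    ⟨hs.1, lt_of_le_of_lt hs.2 ht.2⟩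
  have hxc : ContinuousOn x (Set.Icc 0 t) := fun s hs =>
    ((hsol s (hIccsub hs)).continuousWithinAt).mono hIccsub
  have hCopen : IsOpen {y : Fin n → ℝ | ∀ i, y i ∈ Set.Ioo (0:ℝ) 1} := by
    have : {y : Fin n → ℝ | ∀ i, y i ∈ Set.Ioo (0:ℝ) 1}
        = ⋂ i, (fun y : Fin n → ℝ => y i) ⁻¹' (Set.Ioo 0 1) := by
      ext y; simp
    rw [this]
    exact isOpen_iInter_of_finite fun i => isOpen_Ioo.preimage (continuous_apply i)
  have hBclosed : IsClosed B := by
    have : B = Set.Icc 0 t ∩ x ⁻¹' {y : Fin n → ℝ | ∀ i, y i ∈ Set.Ioo (0:ℝ) 1}ᶜ := by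
      ext s; simp [hB]
    rw [this]
    exact hxc.preimage_isClosed_of_isClosed isClosed_Icc hCopen.isClosed_compl
  have hBbdd : BddBelow B := ⟨0, fun s hs => hs.1.1⟩
  set t₀ := sInf B with ht₀def
  have ht₀B : t₀ ∈ B := hBclosed.csInf_mem ⟨t, hBne⟩ hBbdd
  have ht₀0 : 0 ≤ t₀ := ht₀B.1.1
  have ht₀t : t₀ ≤ t := ht₀B.1.2
  have ht₀pos : 0 < t₀ := by
    rcases eq_or_lt_of_le ht₀0 with h | h
    · exact absurd (fun i => hx0 i) (h ▸ ht₀B).2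
    · exact h
  have hgood : ∀ s, 0 ≤ s → s < t₀ → ∀ i, x s i ∈ Set.Ioo (0:ℝ) 1 := by
    intro s hs0 hst i
    by_contra hbad
    have hsB : s ∈ B := ⟨⟨hs0, le_trans (le_of_lt hst) ht₀t⟩, fun hall => hbad (hall i)⟩
    exact absurd (csInf_le hBbdd hsB) (not_le.mpr hst)
  obtain ⟨i, hi⟩ : ∃ i, x t₀ i ∉ Set.Ioo (0:ℝ) 1 := by
    by_contra hall; push_neg at hall
    exact ht₀B.2 fun i => hall i
  -- coordinate derivative
  have hcoordderiv : ∀ s ∈ Set.Ioo (0:ℝ) t₀, HasDerivAt (fun u => x u i) (vf (x s) i) s := by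
    intro s hs
    have hsmem : s ∈ Set.Ico (0:ℝ) Tbar := ⟨le_of_lt hs.1, lt_of_lt_of_le hs.2 (le_trans ht₀t (le_of_lt ht.2))⟩
    have hnhds : Set.Ico (0:ℝ) Tbar ∈ nhds s := by
      have : Set.Ioo (0:ℝ) Tbar ∈ nhds s :=
        isOpen_Ioo.mem_nhds ⟨hs.1, hsmem.2⟩
      exact Filter.mem_of_superset this Set.Ioo_subset_Ico_self
    have hx' : HasDerivAt x (vf (x s)) s := (hsol s hsmem).hasDerivAt hnhds
    exact (ContinuousLinearMap.proj (R := ℝ) (φ := fun _ : Fin n => ℝ) i).hasFDerivAt.comp_hasDerivAt s hx'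
  set K := ((1 + (∑ k, |W i k|) / m) * (τ / T) *
    (∑ j, (((∑ k, |W j k|) + |v j|) / T + 2 / τ))) with hKdef
  have hK0 : 0 ≤ K := by
    rw [hKdef]
    have h1 : (0:ℝ) ≤ (1 + (∑ k, |W i k|) / m) * (τ / T) := by positivity
    refine mul_nonneg h1 (Finset.sum_nonneg fun j _ => by positivity)
  have hcont0 : ContinuousOn (fun u => x u i) (Set.Icc 0 t₀) :=
    (continuous_apply i).comp_continuousOn (hxc.mono (Set.Icc_subset_Icc_right ht₀t))
  have hbound : ∀ s ∈ Set.Ioo (0:ℝ) t₀,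
      |vf (x s) i| ≤ K * (x s i - x s i ^ 2) := by
    intro s hs
    exact hvfb (x s) (hgood s (le_of_lt hs.1) hs.2) i
  simp only [Set.mem_Ioo, not_and, not_lt] at hi
  rcases le_or_gt (x t₀ i) 0 with hle | hgt
  · -- lower boundary
    have hpos0 : 0 < x t₀ i := by
      apply exp_mono_pos K t₀ (fun u => x u i) (fun s => vf (x s) i) ht₀pos hcont0 hcoordderiv
      · intro s hs
        have hxsi := hgood s (le_of_lt hs.1) hs.2 i
        have h1 := hbound s hs
        have h2 : K * (x s i - x s i ^ 2) ≤ K * x s i := by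
          apply mul_le_mul_of_nonneg_left _ hK0
          nlinarith [hxsi.1]
        nlinarith [neg_abs_le (vf (x s) i)]
      · exact (hx0 i).1
    linarith
  · -- upper boundary
    have h1le : 1 ≤ x t₀ i := hi hgt
    have hpos1 : 0 < 1 - x t₀ i := by
      apply exp_mono_pos K t₀ (fun u => 1 - x u i) (fun s => -(vf (x s) i)) ht₀pos
      · exact (continuousOn_const.sub hcont0)
      · intro s hs
        exact ((hasDerivAt_const s (1:ℝ)).sub (hcoordderiv s hs)).congr_deriv (by ring)
      · intro s hs
        have hxsi := hgood s (le_of_lt hs.1) hs.2 i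
        have h1 := hbound s hs
        have h2 : K * (x s i - x s i ^ 2) ≤ K * (1 - x s i) := by
          apply mul_le_mul_of_nonneg_left _ hK0
          nlinarith [hxsi.1, hxsi.2]
        nlinarith [le_abs_self (vf (x s) i)]
      · have := (hx0 i).2; linarith
    linarith
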